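/- Let # and $ be two characters not occurring in the string T over alphabet Σ, and let T' = #·T·$. Let W be a nonempty string over Σ and let c, b be characters. If cW occurs in T' and Wb occurs in T', but cWb does not occur in T', then W is a maximal repeat of T': there exist characters b' ≠ b with Wb' occurring in T', and c' ≠ c with c'W occurring in T'. In particular W is both left-maximal and right-maximal in T'. -/

import Mathlib

/-- Number of (factor) occurrences of `W` in `T`: the number of starting
positions `i` such that `W` is a prefix of `T.drop i`. -/
def occ {α : Type*} [DecidableEq α] (T W : List α) : ℕ :=
  (List.range (T.length + 1)).countP fun i => decide (W <+: T.drop i)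

/-- `W` is right-maximal in `T`: at least two distinct right extensions occur. -/
def rightMax {α : Type*} (T W : List α) : Prop :=
  ∃ b c, b ≠ c ∧ (W ++ [b]) <:+: T ∧ (W ++ [c]) <:+: T

/-- `W` is left-maximal in `T`: at least two distinct left extensions occur. -/
def leftMax {α : Type*} (T W : List α) : Prop :=
  ∃ a c, a ≠ c ∧ (a :: W) <:+: T ∧ (c :: W) <:+: T

/-- If a nonempty infix of `s ++ [d]` does not contain `d`, it can be
extended on the right inside `s ++ [d]`. -/
lemma aux_r {α : Type*} {s X : List α} {d : α} (h : X <:+: s ++ [d])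
    (hX : X ≠ []) (hne : d ∉ X) : ∃ e, X ++ [e] <:+: s ++ [d] := by
  obtain ⟨u, v, huv⟩ := h
  match v with
  | [] =>
    exfalso
    simp only [List.append_nil] at huv
    obtain ⟨X', x, rfl⟩ := X.eq_nil_or_concat.resolve_left hX
    have : x = d := by
      have := congrArg List.getLast? huv
      simpa [← List.append_assoc] using this
    subst this
    exact hne (by simp)
  | e :: v' =>
    exact ⟨e, u, v', by simpa using huv⟩

/-- If a nonempty infix of `d :: s` does not contain `d`, it can be
extended on the left inside `d :: s`. -/
lemma aux_l {α : Type*} {s X : List α} {d : α} (h : X <:+: d :: s)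
    (hX : X ≠ []) (hne : d ∉ X) : ∃ e, e :: X <:+: d :: s := by
  obtain ⟨u, v, huv⟩ := h
  rcases u.eq_nil_or_concat with rfl | ⟨u', e, rfl⟩
  · exfalso
    obtain ⟨x, X', rfl⟩ := List.exists_cons_of_ne_nil hX
    simp only [List.nil_append, List.cons_append, List.cons.injEq] at huv
    exact hne (huv.1 ▸ (List.mem_cons_self (a := x) (l := X')))
  · exact ⟨e, u', v, by simpa [List.append_assoc] using huv⟩

/-- Nothing follows the final sentinel: if `d ∉ s` and `d :: Y` is an infix
of `s ++ [d]`, then `Y = []`. -/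
lemma sentinel_r {α : Type*} {s Y : List α} {d : α} (hd : d ∉ s)
    (h : (d :: Y) <:+: s ++ [d]) : Y = [] := by
  obtain ⟨u, v, huv⟩ := h
  rcases (Y ++ v).eq_nil_or_concat with hnil | ⟨Z, z, hz⟩
  · exact (List.append_eq_nil_iff.mp hnil).1
  · exfalso
    have huv' : u ++ [d] ++ Z ++ [z] = s ++ [d] := by
      simpa [hz, List.append_assoc] using huv
    have hzd : z = d := by
      have huv'' : (u ++ [d] ++ Z) ++ [z] = s ++ [d] := by
        simpa [List.append_assoc] using huv'
      have := List.append_inj_right' huv'' rfl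
      simpa using this
    have : u ++ [d] ++ Z = s := by
      apply List.append_inj_left' (by simpa [hzd, List.append_assoc] using huv')
      simp
    exact hd (this ▸ by simp)

/-- Nothing precedes the initial sentinel: if `d ∉ s` and `Y ++ [d]` is an
infix of `d :: s`, then `Y = []`. -/
lemma sentinel_l {α : Type*} {s Y : List α} {d : α} (hd : d ∉ s)
    (h : (Y ++ [d]) <:+: d :: s) : Y = [] := by
  obtain ⟨u, v, huv⟩ := h
  rcases u with _ | ⟨e, u'⟩
  · rcases Y with _ | ⟨y, Y'⟩
    · rfl
    · exfalso
      simp only [List.nil_append, List.cons_append, List.cons.injEq] at huv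
      exact hd (huv.2 ▸ by simp)
  · exfalso
    simp only [List.cons_append, List.cons.injEq] at huv
    exact hd (huv.2 ▸ by simp)

/-- with sentinels `#`,`$` not occurring in `T`, and
`T' = # · T · $`, if `cW` and `Wb` occur in `T'` but `cWb` does not,
then `W` is a maximal repeat of `T'`. -/
theorem maximal_repeat_of_mismatch {α : Type*} (T W : List α)
    (hash dol : α) (hh : hash ∉ T) (hd : dol ∉ T) (hhd : hash ≠ dol)
    (hW : W ≠ []) (hWsig : ∀ x ∈ W, x ≠ hash ∧ x ≠ dol)
    (c b : α)
    (h1 : (c :: W) <:+: (hash :: T ++ [dol]))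
    (h2 : (W ++ [b]) <:+: (hash :: T ++ [dol]))
    (h3 : ¬ (c :: (W ++ [b])) <:+: (hash :: T ++ [dol])) :
    (∃ b' : α, b' ≠ b ∧ (W ++ [b']) <:+: (hash :: T ++ [dol])) ∧
    (∃ c' : α, c' ≠ c ∧ (c' :: W) <:+: (hash :: T ++ [dol])) ∧
    leftMax (hash :: T ++ [dol]) W ∧ rightMax (hash :: T ++ [dol]) W := by
  have hWd : dol ∉ W := fun hx => (hWsig _ hx).2 rfl
  have hWh : hash ∉ W := fun hx => (hWsig _ hx).1 rfl
  have hTd : dol ∉ hash :: T := by simp [hd, Ne.symm hhd]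
  have hTh : hash ∉ T ++ [dol] := by simp [hh, hhd]
  -- c ≠ dol
  have hcd : c ≠ dol := fun hc => hW (sentinel_r hTd (hc ▸ h1))
  -- b ≠ hash
  have hbh : b ≠ hash := fun hb => hW (sentinel_l hTh (hb ▸ h2))
  -- right extension of the occurrence of cW
  have h1' : (c :: W) <:+: (hash :: T) ++ [dol] := by simpa using h1
  have hdnc : dol ∉ c :: W := by simp [hWd, Ne.symm hcd]
  obtain ⟨e, he⟩ := aux_r h1' (by simp) hdnc
  have heb : e ≠ b := by
    intro h
    exact h3 (by rw [← h]; simpa using he)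
  have hWe : (W ++ [e]) <:+: (hash :: T ++ [dol]) := by
    have h' : (W ++ [e]) <:+: (c :: W) ++ [e] := ⟨[c], [], by simp⟩
    exact h'.trans (by simpa using he)
  -- left extension of the occurrence of Wb
  have h2' : (W ++ [b]) <:+: hash :: (T ++ [dol]) := by simpa using h2
  have hhnc : hash ∉ W ++ [b] := by simp [hWh, Ne.symm hbh]
  obtain ⟨f, hf⟩ := aux_l h2' (by simp) hhnc
  have hfc : f ≠ c := by
    intro h
    exact h3 (by rw [← h]; simpa using hf)
  have hfW : (f :: W) <:+: (hash :: T ++ [dol]) := by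
    have h' : (f :: W) <:+: f :: (W ++ [b]) := ⟨[], [b], by simp⟩
    exact h'.trans (by simpa using hf)
  refine ⟨⟨e, heb, hWe⟩, ⟨f, hfc, hfW⟩, ⟨f, c, hfc, hfW, h1⟩, ⟨e, b, heb, hWe, h2⟩⟩
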